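/- Let T be a linear operator on ℝ^n such that ℝ^n has only finitely many T-invariant subspaces. Then the characteristic polynomial of T equals its minimal polynomial. -/

import Mathlib

open Polynomial

theorem stmt_18 (n : ℕ) (T : Module.End ℝ (Fin n → ℝ))
    (hfin : {W : Submodule ℝ (Fin n → ℝ) | ∀ x ∈ W, T x ∈ W}.Finite) :
    LinearMap.charpoly T = minpoly ℝ T := by
  set V := Fin n → ℝ
  set W : V → Submodule ℝ V :=
    fun v => Submodule.span ℝ (Set.range fun k : ℕ => (T ^ k) v) with hW
  -- each W v is invariant
  have hWinv : ∀ v, W v ∈ {W : Submodule ℝ V | ∀ x ∈ W, T x ∈ W} := by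
    intro v
    have hmap : Submodule.map T (W v) ≤ W v := by
      rw [hW]
      simp only [Submodule.map_span]
      apply Submodule.span_le.2
      rintro _ ⟨_, ⟨k, rfl⟩, rfl⟩
      refine Submodule.subset_span ⟨k + 1, ?_⟩
      show (T ^ (k + 1)) v = T ((T ^ k) v)
      rw [pow_succ', Module.End.mul_apply]
    intro x hx
    exact hmap ⟨x, hx, rfl⟩
  have hfin2 : (Set.range W).Finite := hfin.subset (by rintro _ ⟨v, rfl⟩; exact hWinv v)
  -- the cyclic subspaces cover everything
  have hcover : ⋃ p ∈ hfin2.toFinset, (p : Set V) = Set.univ := by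
    apply Set.eq_univ_iff_forall.2
    intro x
    have hx : x ∈ W x := Submodule.subset_span ⟨0, by show (T ^ 0) x = x; simp⟩
    exact Set.mem_biUnion (hfin2.mem_toFinset.2 ⟨x, rfl⟩) hx
  have htop := Subspace.top_mem_of_biUnion_eq_univ hcover
  rw [Set.Finite.mem_toFinset] at htop
  obtain ⟨v, hv⟩ := htop
  -- degree argument
  have hint : IsIntegral ℝ T := LinearMap.isIntegral T
  have hm : (minpoly ℝ T).Monic := minpoly.monic hint
  set m := minpoly ℝ T with hmdef
  set d := m.natDegree with hd
  set s : Finset V := (Finset.range d).image (fun i => (T ^ i) v) with hs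
  have key : ∀ k : ℕ, (T ^ k) v ∈ Submodule.span ℝ (s : Set V) := by
    intro k
    have h1 : Polynomial.aeval T ((X ^ k : ℝ[X]) %ₘ m) = Polynomial.aeval T (X ^ k) :=
      aeval_modByMonic_eq_self_of_root (minpoly.aeval ℝ T)
    have h2 : (T ^ k) v = Polynomial.aeval T ((X ^ k : ℝ[X]) %ₘ m) v := by
      rw [h1]; simp
    rw [h2]
    set r := (X ^ k : ℝ[X]) %ₘ m with hr
    rcases eq_or_ne r 0 with h0 | h0
    · simp [h0]
    · have hdeg : r.natDegree < d := by
        have h3 : r.degree < m.degree := degree_modByMonic_lt _ hm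
        have h4 : m.degree = (d : ℕ) := (degree_eq_natDegree hm.ne_zero)
        rwa [h4, degree_eq_natDegree h0, Nat.cast_lt] at h3
      rw [Polynomial.as_sum_range' r d hdeg]
      simp only [map_sum, LinearMap.coe_sum, Finset.sum_apply]
      apply Submodule.sum_mem
      intro i hi
      have : (Polynomial.aeval T) ((monomial i) (r.coeff i)) v = r.coeff i • (T ^ i) v := by
        simp [aeval_monomial, Algebra.smul_def]
      rw [this]
      exact Submodule.smul_mem _ _ (Submodule.subset_span
        (Finset.mem_coe.2 (Finset.mem_image.2 ⟨i, hi, rfl⟩)))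
  have htopspan : Submodule.span ℝ (s : Set V) = ⊤ := by
    rw [eq_top_iff, ← hv, hW]
    apply Submodule.span_le.2
    rintro _ ⟨k, rfl⟩
    exact key k
  have hfinrank : Module.finrank ℝ V ≤ d := by
    have := finrank_span_finset_le_card (R := ℝ) s
    rw [Set.finrank, htopspan] at this
    calc Module.finrank ℝ V = Module.finrank ℝ (⊤ : Submodule ℝ V) :=
          (finrank_top ℝ V).symm
      _ ≤ s.card := this
      _ ≤ d := by
          rw [hs]
          exact (Finset.card_image_le).trans (by simp)
  have hn : (LinearMap.charpoly T).natDegree ≤ m.natDegree := by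
    rw [LinearMap.charpoly_natDegree]
    exact hfinrank
  exact eq_of_monic_of_dvd_of_natDegree_le hm (LinearMap.charpoly_monic T)
    (LinearMap.minpoly_dvd_charpoly T) hn
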